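/- For every integer k ≥ 0, neither is ℝ^k × sl(2,ℝ) a contraction of ℝ^k × su(2), nor is ℝ^k × su(2) a contraction of ℝ^k × sl(2,ℝ). -/

import Mathlib

open Filter Topology

/-- `bg₀` (a bracket on `W`) is a contraction of `bg` (a bracket on `V`). -/
def IsContractionOf {V W : Type*} [AddCommGroup V] [Module ℝ V]
    [AddCommGroup W] [Module ℝ W] [TopologicalSpace W]
    (bg : V → V → V) (bg₀ : W → W → W) : Prop :=
  ∃ I : Set ℝ, (𝓝[I \ {0}] (0 : ℝ)).NeBot ∧
    ∃ C : ℝ → (W ≃ₗ[ℝ] V), ∀ x y : W,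
      Tendsto (fun r => (C r).symm (bg (C r x) (C r y))) (𝓝[I \ {0}] (0 : ℝ)) (𝓝 (bg₀ x y))

/-- The bracket of `su(2)` on `Fin 3 → ℝ`: `[e₁,e₂] = e₃`, `[e₂,e₃] = e₁`, `[e₃,e₁] = e₂`. -/
def su2Bracket (x y : Fin 3 → ℝ) : Fin 3 → ℝ :=
  ![x 1 * y 2 - x 2 * y 1, x 2 * y 0 - x 0 * y 2, x 0 * y 1 - x 1 * y 0]

/-- The bracket of `sl(2,ℝ)` on `Fin 3 → ℝ`: `[e₁,e₂] = e₁`, `[e₂,e₃] = e₃`,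
`[e₁,e₃] = 2e₂`. -/
def sl2Bracket (x y : Fin 3 → ℝ) : Fin 3 → ℝ :=
  ![x 0 * y 1 - x 1 * y 0, 2 * (x 0 * y 2 - x 2 * y 0), x 1 * y 2 - x 2 * y 1]

namespace NCsu2sl2

abbrev Vk (k : ℕ) := (Fin 3 → ℝ) × (Fin k → ℝ)

noncomputable def bas (k : ℕ) : Module.Basis (Fin 3 ⊕ Fin k) ℝ (Vk k) :=
  (Pi.basisFun ℝ (Fin 3)).prod (Pi.basisFun ℝ (Fin k))

@[simp] lemma bas_repr_inl {k : ℕ} (x : Vk k) (i : Fin 3) :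
    (bas k).repr x (Sum.inl i) = x.1 i := by
  simp [bas, Module.Basis.prod_repr_inl]

@[simp] lemma bas_repr_inr {k : ℕ} (x : Vk k) (j : Fin k) :
    (bas k).repr x (Sum.inr j) = x.2 j := by
  simp [bas, Module.Basis.prod_repr_inr]

@[simp] lemma bas_inl {k : ℕ} (i : Fin 3) :
    bas k (Sum.inl i) = ((Pi.single i 1 : Fin 3 → ℝ), 0) := by
  refine Prod.ext ?_ ?_
  · rw [show ((Pi.single i 1 : Fin 3 → ℝ), (0 : Fin k → ℝ)).1 = Pi.single i 1 from rfl,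
      ← Pi.basisFun_apply]
    exact Module.Basis.prod_apply_inl_fst _ _ _
  · exact Module.Basis.prod_apply_inl_snd _ _ _

@[simp] lemma bas_inr {k : ℕ} (j : Fin k) :
    bas k (Sum.inr j) = (0, (Pi.single j 1 : Fin k → ℝ)) := by
  refine Prod.ext ?_ ?_
  · exact Module.Basis.prod_apply_inr_fst _ _ _
  · rw [show ((0 : Fin 3 → ℝ), (Pi.single j 1 : Fin k → ℝ)).2 = Pi.single j 1 from rfl,
      ← Pi.basisFun_apply]
    exact Module.Basis.prod_apply_inr_snd _ _ _

lemma trace_comp_basis {ι M : Type*} [Fintype ι] [DecidableEq ι] [AddCommGroup M] [Module ℝ M]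
    (b : Module.Basis ι ℝ M) (F G : M →ₗ[ℝ] M) :
    LinearMap.trace ℝ M (F ∘ₗ G) = ∑ i, ∑ l, b.repr (G (b i)) l * b.repr (F (b l)) i := by
  rw [LinearMap.trace_eq_matrix_trace ℝ b, Matrix.trace]
  refine Finset.sum_congr rfl fun i _ => ?_
  rw [Matrix.diag_apply, LinearMap.toMatrix_apply, LinearMap.comp_apply]
  conv_lhs => rw [← Module.Basis.sum_repr b (G (b i))]
  rw [map_sum, map_sum]
  simp only [map_smul, Finsupp.coe_finset_sum, Finset.sum_apply, Finsupp.coe_smul,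
    Pi.smul_apply, smul_eq_mul]

noncomputable def Bsu (k : ℕ) : Vk k →ₗ[ℝ] Vk k →ₗ[ℝ] Vk k :=
  LinearMap.mk₂ ℝ (fun x y => (su2Bracket x.1 y.1, 0))
    (by intro x x' y; refine Prod.ext ?_ (by simp)
        funext i; fin_cases i <;> simp [su2Bracket] <;> ring)
    (by intro c x y; refine Prod.ext ?_ (by simp)
        funext i; fin_cases i <;> simp [su2Bracket] <;> ring)
    (by intro x y y'; refine Prod.ext ?_ (by simp)
        funext i; fin_cases i <;> simp [su2Bracket] <;> ring)
    (by intro c x y; refine Prod.ext ?_ (by simp)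
        funext i; fin_cases i <;> simp [su2Bracket] <;> ring)

noncomputable def Bsl (k : ℕ) : Vk k →ₗ[ℝ] Vk k →ₗ[ℝ] Vk k :=
  LinearMap.mk₂ ℝ (fun x y => (sl2Bracket x.1 y.1, 0))
    (by intro x x' y; refine Prod.ext ?_ (by simp)
        funext i; fin_cases i <;> simp [sl2Bracket] <;> ring)
    (by intro c x y; refine Prod.ext ?_ (by simp)
        funext i; fin_cases i <;> simp [sl2Bracket] <;> ring)
    (by intro x y y'; refine Prod.ext ?_ (by simp)
        funext i; fin_cases i <;> simp [sl2Bracket] <;> ring)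
    (by intro c x y; refine Prod.ext ?_ (by simp)
        funext i; fin_cases i <;> simp [sl2Bracket] <;> ring)

@[simp] lemma Bsu_apply {k : ℕ} (x y : Vk k) : Bsu k x y = (su2Bracket x.1 y.1, 0) := rfl
@[simp] lemma Bsl_apply {k : ℕ} (x y : Vk k) : Bsl k x y = (sl2Bracket x.1 y.1, 0) := rfl


lemma trace_Bsu {k : ℕ} (u v : Vk k) :
    LinearMap.trace ℝ (Vk k) (Bsu k u ∘ₗ Bsu k v) =
      -2 * (u.1 0 * v.1 0 + u.1 1 * v.1 1 + u.1 2 * v.1 2) := by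
  rw [trace_comp_basis (bas k)]
  simp only [Fintype.sum_sum_type, bas_inl, bas_inr, Bsu_apply, bas_repr_inl, bas_repr_inr]
  simp [su2Bracket, Fin.sum_univ_three, Pi.single_apply]
  ring

lemma trace_Bsl {k : ℕ} (u v : Vk k) :
    LinearMap.trace ℝ (Vk k) (Bsl k u ∘ₗ Bsl k v) =
      2 * u.1 1 * v.1 1 - 4 * u.1 0 * v.1 2 - 4 * u.1 2 * v.1 0 := by
  rw [trace_comp_basis (bas k)]
  simp only [Fintype.sum_sum_type, bas_inl, bas_inr, Bsl_apply, bas_repr_inl, bas_repr_inr]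
  simp [sl2Bracket, Fin.sum_univ_three, Pi.single_apply]
  ring


lemma sum_conj_eq_trace {k : ℕ} (C : Vk k ≃ₗ[ℝ] Vk k) (B : Vk k →ₗ[ℝ] Vk k →ₗ[ℝ] Vk k)
    (x y : Vk k) :
    ∑ i, ∑ l, (bas k).repr (C.symm (B (C y) (C (bas k i)))) l *
        (bas k).repr (C.symm (B (C x) (C (bas k l)))) i
      = LinearMap.trace ℝ (Vk k) (B (C x) ∘ₗ B (C y)) := by
  have hx : ∀ w : Vk k, C.symm (B (C x) (C w)) = C.symm.conj (B (C x)) w := by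
    intro w; simp [LinearEquiv.conj_apply]
  have hy : ∀ w : Vk k, C.symm (B (C y) (C w)) = C.symm.conj (B (C y)) w := by
    intro w; simp [LinearEquiv.conj_apply]
  simp_rw [hx, hy]
  rw [← trace_comp_basis (bas k), ← LinearEquiv.conj_comp, LinearMap.trace_conj']

lemma keyTendsto {k : ℕ} (Bg B₀ : Vk k →ₗ[ℝ] Vk k →ₗ[ℝ] Vk k) (l : Filter ℝ)
    (C : ℝ → (Vk k ≃ₗ[ℝ] Vk k))
    (h : ∀ x y : Vk k, Tendsto (fun r => (C r).symm (Bg (C r x) (C r y))) l (𝓝 (B₀ x y)))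
    (x y : Vk k) :
    Tendsto (fun r => LinearMap.trace ℝ (Vk k) (Bg (C r x) ∘ₗ Bg (C r y))) l
      (𝓝 (LinearMap.trace ℝ (Vk k) (B₀ x ∘ₗ B₀ y))) := by
  have hrw : ∀ r, LinearMap.trace ℝ (Vk k) (Bg (C r x) ∘ₗ Bg (C r y)) =
      ∑ i, ∑ j, (bas k).repr ((C r).symm (Bg (C r y) (C r (bas k i)))) j *
        (bas k).repr ((C r).symm (Bg (C r x) (C r (bas k j)))) i :=
    fun r => (sum_conj_eq_trace (C r) Bg x y).symm
  rw [trace_comp_basis (bas k)]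
  refine Tendsto.congr (fun r => (hrw r).symm) ?_
  refine tendsto_finset_sum _ fun i _ => tendsto_finset_sum _ fun j _ => Tendsto.mul ?_ ?_
  · have h1 := h y (bas k i)
    rcases j with j | j
    · simp only [bas_repr_inl]
      exact (((continuous_apply j).comp continuous_fst).tendsto _).comp h1
    · simp only [bas_repr_inr]
      exact (((continuous_apply j).comp continuous_snd).tendsto _).comp h1
  · have h1 := h x (bas k j)
    rcases i with i | i
    · simp only [bas_repr_inl]
      exact (((continuous_apply i).comp continuous_fst).tendsto _).comp h1
    · simp only [bas_repr_inr]
      exact (((continuous_apply i).comp continuous_snd).tendsto _).comp h1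


lemma sl_negdef_contradiction (p0 p1 p2 q0 q1 q2 : ℝ)
    (hA : 2*p1*p1 - 4*p0*p2 - 4*p2*p0 < 0)
    (hB : 2*q1*q1 - 4*q0*q2 - 4*q2*q0 < 0)
    (hD : (2*p1*q1 - 4*p0*q2 - 4*p2*q0)^2 <
      (2*p1*p1 - 4*p0*p2 - 4*p2*p0) * (2*q1*q1 - 4*q0*q2 - 4*q2*q0)) : False := by
  set α := 2*p1*p1 - 4*p0*p2 - 4*p2*p0 with hα
  set β := 2*q1*q1 - 4*q0*q2 - 4*q2*q0 with hβ
  set γ := 2*p1*q1 - 4*p0*q2 - 4*p2*q0 with hγ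
  set c := p0 + p2 with hc
  set d := q0 + q2 with hd
  have hQ : 0 ≤ d^2*α - 2*c*d*γ + c^2*β := by
    have : d^2*α - 2*c*d*γ + c^2*β
        = 2*(d*p1 - c*q1)^2 + 2*(d*(p0 - p2) - c*(q0 - q2))^2 := by
      rw [hα, hβ, hγ, hc, hd]; ring
    rw [this]; positivity
  by_cases hc0 : c = 0
  · by_cases hd0 : d = 0
    · -- c = 0 forces α ≥ 0
      have hp2 : p2 = -p0 := by
        have := hc.symm.trans hc0; linarith
      have h' : α = 2*p1*p1 + 8*(p0*p0) := by rw [hα, hp2]; ring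
      nlinarith [mul_self_nonneg p0, mul_self_nonneg p1]
    · -- c = 0, d ≠ 0 : Q = d²α ≥ 0 but α < 0
      have hd2 : 0 < d^2 := by positivity
      rw [hc0] at hQ
      nlinarith [mul_pos hd2 (neg_pos.mpr hA)]
  · have hc2 : 0 < c^2 := by positivity
    nlinarith [hQ, sq_nonneg (d*α - c*γ), mul_pos hc2 (sub_pos.mpr hD),
      mul_nonneg (le_of_lt (neg_pos.mpr hA)) hQ]


noncomputable def e0 (k : ℕ) : Vk k := ((Pi.single 0 1 : Fin 3 → ℝ), 0)
noncomputable def e1 (k : ℕ) : Vk k := ((Pi.single 1 1 : Fin 3 → ℝ), 0)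

end NCsu2sl2

open NCsu2sl2 in
/-- For every `k ≥ 0`, neither is `ℝ^k × sl(2,ℝ)` a contraction of `ℝ^k × su(2)`,
nor is `ℝ^k × su(2)` a contraction of `ℝ^k × sl(2,ℝ)`. -/
theorem not_contraction_su2_sl2 (k : ℕ) :
    (¬ IsContractionOf
        (fun x y : (Fin 3 → ℝ) × (Fin k → ℝ) => (su2Bracket x.1 y.1, 0))
        (fun x y : (Fin 3 → ℝ) × (Fin k → ℝ) => (sl2Bracket x.1 y.1, 0))) ∧
    (¬ IsContractionOf
        (fun x y : (Fin 3 → ℝ) × (Fin k → ℝ) => (sl2Bracket x.1 y.1, 0))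
        (fun x y : (Fin 3 → ℝ) × (Fin k → ℝ) => (su2Bracket x.1 y.1, 0))) := by

  constructor
  · rintro ⟨I, hne, C, h⟩
    have h' : ∀ x y : Vk k, Tendsto (fun r => (C r).symm (Bsu k (C r x) (C r y)))
        (𝓝[I \ {0}] 0) (𝓝 (Bsl k x y)) := h
    have ht := keyTendsto (Bsu k) (Bsl k) _ C h' (e1 k) (e1 k)
    have hlim : LinearMap.trace ℝ (Vk k) (Bsl k (e1 k) ∘ₗ Bsl k (e1 k)) = 2 := by
      rw [trace_Bsl]; simp [e1, Pi.single_apply]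
    rw [hlim] at ht
    have h2 : (2:ℝ) ≤ 0 := by
      refine le_of_tendsto ht (Eventually.of_forall fun r => ?_)
      rw [trace_Bsu]
      nlinarith [mul_self_nonneg ((C r (e1 k)).1 0), mul_self_nonneg ((C r (e1 k)).1 1),
        mul_self_nonneg ((C r (e1 k)).1 2)]
    linarith
  · rintro ⟨I, hne, C, h⟩
    have h' : ∀ x y : Vk k, Tendsto (fun r => (C r).symm (Bsl k (C r x) (C r y)))
        (𝓝[I \ {0}] 0) (𝓝 (Bsu k x y)) := h
    have hα := keyTendsto (Bsl k) (Bsu k) _ C h' (e0 k) (e0 k)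
    have hβ := keyTendsto (Bsl k) (Bsu k) _ C h' (e1 k) (e1 k)
    have hγ := keyTendsto (Bsl k) (Bsu k) _ C h' (e0 k) (e1 k)
    have l0 : LinearMap.trace ℝ (Vk k) (Bsu k (e0 k) ∘ₗ Bsu k (e0 k)) = -2 := by
      rw [trace_Bsu]; simp [e0, Pi.single_apply]
    have l1 : LinearMap.trace ℝ (Vk k) (Bsu k (e1 k) ∘ₗ Bsu k (e1 k)) = -2 := by
      rw [trace_Bsu]; simp [e1, Pi.single_apply]
    have l01 : LinearMap.trace ℝ (Vk k) (Bsu k (e0 k) ∘ₗ Bsu k (e1 k)) = 0 := by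
      rw [trace_Bsu]; simp [e0, e1, Pi.single_apply]
    rw [l0] at hα; rw [l1] at hβ; rw [l01] at hγ
    have eα := hα.eventually_lt_const (show (-2:ℝ) < 0 by norm_num)
    have eβ := hβ.eventually_lt_const (show (-2:ℝ) < 0 by norm_num)
    have eD := (((hα.mul hβ).sub (hγ.mul hγ)).eventually_const_lt
      (show (0:ℝ) < (-2)*(-2) - 0*0 by norm_num))
    obtain ⟨r, ⟨h1, h2⟩, h3⟩ := ((eα.and eβ).and eD).exists
    simp only [trace_Bsl] at h1 h2 h3
    exact sl_negdef_contradiction _ _ _ _ _ _ h1 h2 (by nlinarith [h3])
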